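/- arXiv:2004.01293 — 2 statements merged into one kernel-verified Lean document; each statement's English description precedes it below -/
import Mathlib

section
/- Let G be a weighted directed graph on vertex set V = {1,…,n} and let M_1 be the simple cyclic-triangle motif with vertices {1,2,3} and edge set E_M = {(1,2),(2,3),(3,1)}. Then the functional motif adjacency matrix of M_1 in G satisfies M^func = (1/3)·(C + Cᵀ), where C = Jᵀ ∘ (J G) + Jᵀ ∘ (G J) + Gᵀ ∘ (J J). -/
open scoped Classical BigOperators Matrix

noncomputable section

/-- A motif on `m` vertices: a weakly connected loopless directed graph on the vertex set
`Fin m`, given by its edge set. -/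
structure Motif (m : ℕ) where
  edges : Finset (Fin m × Fin m)
  irrefl : ∀ e ∈ edges, e.1 ≠ e.2
  connected : (SimpleGraph.fromRel (fun u v => (u, v) ∈ edges)).Connected

variable {n m : ℕ}

/-- Edge set of the weighted directed graph with weight matrix `G`:
`E = {(i,j) : i ≠ j and G i j > 0}`. -/
def edgeFinset (G : Matrix (Fin n) (Fin n) ℝ) : Finset (Fin n × Fin n) :=
  Finset.univ.filter fun p => p.1 ≠ p.2 ∧ 0 < G p.1 p.2

/-- Directed-edge indicator matrix `J`. -/
def Jmat (G : Matrix (Fin n) (Fin n) ℝ) : Matrix (Fin n) (Fin n) ℝ :=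
  fun i j => if (i, j) ∈ edgeFinset G then 1 else 0

/-- Single-edge indicator matrix `J_s`. -/
def Jsmat (G : Matrix (Fin n) (Fin n) ℝ) : Matrix (Fin n) (Fin n) ℝ :=
  fun i j => if (i, j) ∈ edgeFinset G ∧ (j, i) ∉ edgeFinset G then 1 else 0

/-- Double-edge indicator matrix `J_d`. -/
def Jdmat (G : Matrix (Fin n) (Fin n) ℝ) : Matrix (Fin n) (Fin n) ℝ :=
  fun i j => if (i, j) ∈ edgeFinset G ∧ (j, i) ∈ edgeFinset G then 1 else 0

/-- Missing-edge indicator matrix `J_0`. -/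
def J0mat (G : Matrix (Fin n) (Fin n) ℝ) : Matrix (Fin n) (Fin n) ℝ :=
  fun i j => if (i, j) ∉ edgeFinset G ∧ (j, i) ∉ edgeFinset G ∧ i ≠ j then 1 else 0

/-- Vertex-distinct indicator matrix `J_n`. -/
def Jnmat (n : ℕ) : Matrix (Fin n) (Fin n) ℝ :=
  fun i j => if i ≠ j then 1 else 0

/-- Single-edge weighted matrix `G_s`. -/
def Gsmat (G : Matrix (Fin n) (Fin n) ℝ) : Matrix (Fin n) (Fin n) ℝ :=
  fun i j => if (i, j) ∈ edgeFinset G ∧ (j, i) ∉ edgeFinset G then G i j else 0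

/-- Double-edge weighted matrix `G_d`. -/
def Gdmat (G : Matrix (Fin n) (Fin n) ℝ) : Matrix (Fin n) (Fin n) ℝ :=
  fun i j => if (i, j) ∈ edgeFinset G ∧ (j, i) ∈ edgeFinset G then G i j + G j i else 0

/-- Entrywise (Hadamard) product of matrices. -/
def had (A B : Matrix (Fin n) (Fin n) ℝ) : Matrix (Fin n) (Fin n) ℝ :=
  fun i j => A i j * B i j

/-- Well-formedness of a candidate subgraph `H = (V_H, E_H)` of a graph on `Fin n`:
each edge joins two distinct vertices of `H`. -/
def IsGraphPair (H : Finset (Fin n) × Finset (Fin n × Fin n)) : Prop :=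
  ∀ e ∈ H.2, e.1 ∈ H.1 ∧ e.2 ∈ H.1 ∧ e.1 ≠ e.2

/-- `φ` is an isomorphism from the motif `M` onto the graph `H = (V_H, E_H)`. -/
def IsIso (M : Motif m) (H : Finset (Fin n) × Finset (Fin n × Fin n))
    (φ : Fin m → Fin n) : Prop :=
  Function.Injective φ ∧ Finset.image φ Finset.univ = H.1 ∧
    ∀ u v : Fin m, (u, v) ∈ M.edges ↔ (φ u, φ v) ∈ H.2

/-- `H` is a functional instance of motif `M` in the graph with weight matrix `G`,
i.e. `M ≅ H ≤ G`. -/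
def IsFuncInstance (M : Motif m) (G : Matrix (Fin n) (Fin n) ℝ)
    (H : Finset (Fin n) × Finset (Fin n × Fin n)) : Prop :=
  IsGraphPair H ∧ H.2 ⊆ edgeFinset G ∧ ∃ φ, IsIso M H φ

/-- `H` is a structural instance of motif `M` in the graph with weight matrix `G`,
i.e. `M ≅ H < G` (`H` an induced subgraph: `E_H = E ∩ (V_H × V_H)`). -/
def IsStrucInstance (M : Motif m) (G : Matrix (Fin n) (Fin n) ℝ)
    (H : Finset (Fin n) × Finset (Fin n × Fin n)) : Prop :=
  IsGraphPair H ∧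
    H.2 = (edgeFinset G).filter (fun e => e.1 ∈ H.1 ∧ e.2 ∈ H.1) ∧
    ∃ φ, IsIso M H φ

/-- `{i, j}` is an anchored pair of the instance `H`: there is an isomorphism `φ` from
`M` to `H` and distinct anchors `a, b ∈ A` with `φ a = i` and `φ b = j`. -/
def AnchoredPair (M : Motif m) (A : Finset (Fin m))
    (H : Finset (Fin n) × Finset (Fin n × Fin n)) (i j : Fin n) : Prop :=
  ∃ φ, IsIso M H φ ∧ ∃ a ∈ A, ∃ b ∈ A, a ≠ b ∧ φ a = i ∧ φ b = j

/-- The functional motif adjacency matrix of the motif `(M, A)` in the graph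
with weight matrix `G`. -/
def mamFunc (M : Motif m) (A : Finset (Fin m)) (G : Matrix (Fin n) (Fin n) ℝ) :
    Matrix (Fin n) (Fin n) ℝ :=
  fun i j => (1 / (M.edges.card : ℝ)) *
    ∑ H : Finset (Fin n) × Finset (Fin n × Fin n),
      if IsFuncInstance M G H ∧ AnchoredPair M A H i j then ∑ e ∈ H.2, G e.1 e.2 else 0

/-- The structural motif adjacency matrix of the motif `(M, A)` in the graph
with weight matrix `G`. -/
def mamStruc (M : Motif m) (A : Finset (Fin m)) (G : Matrix (Fin n) (Fin n) ℝ) :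
    Matrix (Fin n) (Fin n) ℝ :=
  fun i j => (1 / (M.edges.card : ℝ)) *
    ∑ H : Finset (Fin n) × Finset (Fin n × Fin n),
      if IsStrucInstance M G H ∧ AnchoredPair M A H i j then ∑ e ∈ H.2, G e.1 e.2 else 0

section AuxM1

def cyc3 (G : Matrix (Fin n) (Fin n) ℝ) (i k j : Fin n) : Prop :=
  (i, k) ∈ edgeFinset G ∧ (k, j) ∈ edgeFinset G ∧ (j, i) ∈ edgeFinset G

def Tfun (i j k : Fin n) : Finset (Fin n) × Finset (Fin n × Fin n) :=
  ({i, k, j}, {(i, k), (k, j), (j, i)})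

lemma mem_edgeFinset' {G : Matrix (Fin n) (Fin n) ℝ} {a b : Fin n} :
    (a, b) ∈ edgeFinset G ↔ a ≠ b ∧ 0 < G a b := by
  simp [edgeFinset]

lemma cyc3_ne {G : Matrix (Fin n) (Fin n) ℝ} {i k j : Fin n} (h : cyc3 G i k j) :
    i ≠ k ∧ k ≠ j ∧ j ≠ i := by
  obtain ⟨h1, h2, h3⟩ := h
  exact ⟨(mem_edgeFinset'.1 h1).1, (mem_edgeFinset'.1 h2).1, (mem_edgeFinset'.1 h3).1⟩

lemma G_zero {G : Matrix (Fin n) (Fin n) ℝ} (hpos : ∀ i j, 0 ≤ G i j)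
    (hdiag : ∀ i, G i i = 0) {a b : Fin n} (h : (a, b) ∉ edgeFinset G) : G a b = 0 := by
  rw [mem_edgeFinset'] at h
  push_neg at h
  by_cases hab : a = b
  · subst hab; exact hdiag a
  · exact le_antisymm (h hab) (hpos a b)

lemma univ_fin3 : (Finset.univ : Finset (Fin 3)) = {0, 1, 2} := by decide

lemma Tfun_isIso {i j k : Fin n} (hik : i ≠ k) (hkj : k ≠ j) (hji : j ≠ i)
    (M1 : Motif 3) (hM : M1.edges = {((0 : Fin 3), 1), (1, 2), (2, 0)}) :
    IsIso M1 (Tfun i j k) ![i, k, j] := by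
  have hij : i ≠ j := fun h => hji h.symm
  refine ⟨?_, ?_, ?_⟩
  · intro u v huv
    fin_cases u <;> fin_cases v <;> simp_all
  · rw [univ_fin3]
    simp [Tfun, Finset.image_insert]
  · intro u v
    rw [hM]
    fin_cases u <;> fin_cases v <;>
      simp [Tfun, Prod.ext_iff, hik, hkj, hji, hij, hik.symm, hkj.symm, hji.symm, hij.symm]

lemma Tfun_funcInstance {G : Matrix (Fin n) (Fin n) ℝ} {i j k : Fin n}
    (hc : cyc3 G i k j)
    (M1 : Motif 3) (hM : M1.edges = {((0 : Fin 3), 1), (1, 2), (2, 0)}) :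
    IsFuncInstance M1 G (Tfun i j k) := by
  obtain ⟨hik, hkj, hji⟩ := cyc3_ne hc
  refine ⟨?_, ?_, ![i, k, j], Tfun_isIso hik hkj hji M1 hM⟩
  · intro e he
    simp only [Tfun, Finset.mem_insert, Finset.mem_singleton] at he
    rcases he with rfl | rfl | rfl <;>
      simp [Tfun, hik, hkj, hji]
  · intro e he
    simp only [Tfun, Finset.mem_insert, Finset.mem_singleton] at he
    rcases he with rfl | rfl | rfl
    · exact hc.1
    · exact hc.2.1
    · exact hc.2.2

lemma Tfun_anch {G : Matrix (Fin n) (Fin n) ℝ} {i j k : Fin n}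
    (hc : cyc3 G i k j)
    (M1 : Motif 3) (hM : M1.edges = {((0 : Fin 3), 1), (1, 2), (2, 0)}) :
    AnchoredPair M1 Finset.univ (Tfun i j k) i j ∧
      AnchoredPair M1 Finset.univ (Tfun i j k) j i := by
  obtain ⟨hik, hkj, hji⟩ := cyc3_ne hc
  constructor
  · exact ⟨![i, k, j], Tfun_isIso hik hkj hji M1 hM, 0, by simp, 2, by simp, by decide,
      rfl, rfl⟩
  · exact ⟨![i, k, j], Tfun_isIso hik hkj hji M1 hM, 2, by simp, 0, by simp, by decide,
      rfl, rfl⟩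

lemma rot_build {G : Matrix (Fin n) (Fin n) ℝ}
    {H : Finset (Fin n) × Finset (Fin n × Fin n)} (hsub : H.2 ⊆ edgeFinset G)
    {x y z : Fin n} (hV : H.1 = {x, y, z}) (hE : H.2 = {(x, y), (y, z), (z, x)}) :
    cyc3 G x y z ∧ H = Tfun x z y := by
  have e1 : (x, y) ∈ edgeFinset G := hsub (by rw [hE]; simp)
  have e2 : (y, z) ∈ edgeFinset G := hsub (by rw [hE]; simp)
  have e3 : (z, x) ∈ edgeFinset G := hsub (by rw [hE]; simp)
  exact ⟨⟨e1, e2, e3⟩, Prod.ext_iff.2 ⟨hV, hE⟩⟩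

lemma inst_char {G : Matrix (Fin n) (Fin n) ℝ} {M1 : Motif 3}
    (hM : M1.edges = {((0 : Fin 3), 1), (1, 2), (2, 0)}) {i j : Fin n}
    {H : Finset (Fin n) × Finset (Fin n × Fin n)}
    (h : IsFuncInstance M1 G H ∧ AnchoredPair M1 Finset.univ H i j) :
    (∃ k, cyc3 G i k j ∧ H = Tfun i j k) ∨ (∃ k, cyc3 G j k i ∧ H = Tfun j i k) := by
  obtain ⟨⟨hGP, hsub, -⟩, ψ, ⟨hinj, himg, hedge⟩, a, -, b, -, hab, ha, hb⟩ := h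
  have hV : H.1 = {ψ 0, ψ 1, ψ 2} := by
    rw [← himg, univ_fin3]
    simp [Finset.image_insert]
  have hE : H.2 = {(ψ 0, ψ 1), (ψ 1, ψ 2), (ψ 2, ψ 0)} := by
    ext e
    constructor
    · intro he
      obtain ⟨x, y⟩ := e
      obtain ⟨h1, h2, -⟩ := hGP (x, y) he
      rw [hV] at h1 h2
      simp only [Finset.mem_insert, Finset.mem_singleton] at h1 h2
      rcases h1 with rfl | rfl | rfl <;> rcases h2 with rfl | rfl | rfl <;>
        · have h3 := (hedge _ _).mpr he
          rw [hM] at h3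
          simp [Prod.ext_iff] at h3 ⊢
    · intro he
      simp only [Finset.mem_insert, Finset.mem_singleton] at he
      rcases he with rfl | rfl | rfl <;>
        · apply (hedge _ _).mp
          rw [hM]; decide
  fin_cases a <;> fin_cases b
  · exact absurd rfl hab
  · -- a = 0, b = 1 : i = ψ 0, j = ψ 1
    subst ha; subst hb
    refine Or.inr ⟨ψ 2, ?_⟩
    have hV' : H.1 = {ψ 1, ψ 2, ψ 0} := by rw [hV]; ext; simp; tauto
    have hE' : H.2 = {(ψ 1, ψ 2), (ψ 2, ψ 0), (ψ 0, ψ 1)} := by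
      rw [hE]; ext; simp; tauto
    exact rot_build hsub hV' hE'
  · -- a = 0, b = 2 : i = ψ 0, j = ψ 2
    subst ha; subst hb
    refine Or.inl ⟨ψ 1, ?_⟩
    exact rot_build hsub hV hE
  · -- a = 1, b = 0 : i = ψ 1, j = ψ 0
    subst ha; subst hb
    refine Or.inl ⟨ψ 2, ?_⟩
    have hV' : H.1 = {ψ 1, ψ 2, ψ 0} := by rw [hV]; ext; simp; tauto
    have hE' : H.2 = {(ψ 1, ψ 2), (ψ 2, ψ 0), (ψ 0, ψ 1)} := by
      rw [hE]; ext; simp; tauto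
    exact rot_build hsub hV' hE'
  · exact absurd rfl hab
  · -- a = 1, b = 2 : i = ψ 1, j = ψ 2
    subst ha; subst hb
    refine Or.inr ⟨ψ 0, ?_⟩
    have hV' : H.1 = {ψ 2, ψ 0, ψ 1} := by rw [hV]; ext; simp; tauto
    have hE' : H.2 = {(ψ 2, ψ 0), (ψ 0, ψ 1), (ψ 1, ψ 2)} := by
      rw [hE]; ext; simp; tauto
    exact rot_build hsub hV' hE'
  · -- a = 2, b = 0 : i = ψ 2, j = ψ 0
    subst ha; subst hb
    refine Or.inr ⟨ψ 1, ?_⟩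
    exact rot_build hsub hV hE
  · -- a = 2, b = 1 : i = ψ 2, j = ψ 1
    subst ha; subst hb
    refine Or.inl ⟨ψ 0, ?_⟩
    have hV' : H.1 = {ψ 2, ψ 0, ψ 1} := by rw [hV]; ext; simp; tauto
    have hE' : H.2 = {(ψ 2, ψ 0), (ψ 0, ψ 1), (ψ 1, ψ 2)} := by
      rw [hE]; ext; simp; tauto
    exact rot_build hsub hV' hE'
  · exact absurd rfl hab

lemma Tfun_weight {G : Matrix (Fin n) (Fin n) ℝ} {i j k : Fin n} (hc : cyc3 G i k j) :
    ∑ e ∈ (Tfun i j k).2, G e.1 e.2 = G i k + G k j + G j i := by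
  obtain ⟨hik, hkj, hji⟩ := cyc3_ne hc
  have hij : i ≠ j := fun h => hji h.symm
  rw [show (Tfun i j k).2 = {(i, k), (k, j), (j, i)} from rfl]
  rw [Finset.sum_insert (by simp [Prod.ext_iff, hik, hij]),
    Finset.sum_insert (by simp [Prod.ext_iff, hkj]), Finset.sum_singleton]
  ring

lemma Tfun_inj_eq {G : Matrix (Fin n) (Fin n) ℝ} {i j k k' : Fin n} (h : cyc3 G i k j)
    (h' : cyc3 G i k' j) (heq : Tfun i j k = Tfun i j k') : k = k' := by
  obtain ⟨hik, hkj, hji⟩ := cyc3_ne h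
  have hij : i ≠ j := fun h => hji h.symm
  have hm : (i, k) ∈ (Tfun i j k').2 := by rw [← heq]; simp [Tfun]
  simp only [Tfun, Finset.mem_insert, Finset.mem_singleton, Prod.ext_iff] at hm
  rcases hm with ⟨-, h⟩ | ⟨-, h⟩ | ⟨h, -⟩
  · exact h
  · exact absurd h hkj
  · exact absurd h hij

lemma Tfun_ne_cross {G : Matrix (Fin n) (Fin n) ℝ} {i j k k' : Fin n} (h : cyc3 G i k j)
    (h' : cyc3 G j k' i) : Tfun i j k ≠ Tfun j i k' := by
  obtain ⟨hik, hkj, hji⟩ := cyc3_ne h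
  have hij : i ≠ j := fun h => hji h.symm
  intro heq
  have hm : (i, j) ∈ (Tfun i j k).2 := by rw [heq]; simp [Tfun]
  simp only [Tfun, Finset.mem_insert, Finset.mem_singleton, Prod.ext_iff] at hm
  rcases hm with ⟨-, h⟩ | ⟨h, -⟩ | ⟨h, -⟩
  · exact (Ne.symm hkj) h
  · exact hik h
  · exact hij h

lemma sum_char (G : Matrix (Fin n) (Fin n) ℝ) (M1 : Motif 3)
    (hM : M1.edges = {((0 : Fin 3), 1), (1, 2), (2, 0)}) (i j : Fin n) :
    (∑ H : Finset (Fin n) × Finset (Fin n × Fin n),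
      if IsFuncInstance M1 G H ∧ AnchoredPair M1 Finset.univ H i j then
        ∑ e ∈ H.2, G e.1 e.2 else 0)
    = (∑ k, if cyc3 G i k j then G i k + G k j + G j i else 0)
      + (∑ k, if cyc3 G j k i then G j k + G k i + G i j else 0) := by
  classical
  rw [← Finset.sum_filter, ← Finset.sum_filter, ← Finset.sum_filter]
  have hset : (Finset.univ.filter (fun H => IsFuncInstance M1 G H ∧
        AnchoredPair M1 Finset.univ H i j))
      = ((Finset.univ.filter (fun k => cyc3 G i k j)).image (Tfun i j))
        ∪ ((Finset.univ.filter (fun k => cyc3 G j k i)).image (Tfun j i)) := by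
    ext H
    simp only [Finset.mem_filter, Finset.mem_univ, true_and, Finset.mem_union,
      Finset.mem_image]
    constructor
    · intro h
      rcases inst_char hM h with ⟨k, hc, rfl⟩ | ⟨k, hc, rfl⟩
      · exact Or.inl ⟨k, hc, rfl⟩
      · exact Or.inr ⟨k, hc, rfl⟩
    · rintro (⟨k, hc, rfl⟩ | ⟨k, hc, rfl⟩)
      · exact ⟨Tfun_funcInstance hc M1 hM, (Tfun_anch hc M1 hM).1⟩
      · exact ⟨Tfun_funcInstance hc M1 hM, (Tfun_anch hc M1 hM).2⟩
  have hdisj : Disjoint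
      ((Finset.univ.filter (fun k => cyc3 G i k j)).image (Tfun i j))
      ((Finset.univ.filter (fun k => cyc3 G j k i)).image (Tfun j i)) := by
    rw [Finset.disjoint_left]
    rintro H h1 h2
    simp only [Finset.mem_image, Finset.mem_filter, Finset.mem_univ, true_and] at h1 h2
    obtain ⟨k, hc, rfl⟩ := h1
    obtain ⟨k', hc', heq⟩ := h2
    exact Tfun_ne_cross hc hc' heq.symm
  rw [hset, Finset.sum_union hdisj,
    Finset.sum_image (fun k hk k' hk' heq => by
      simp only [Finset.mem_coe, Finset.mem_filter, Finset.mem_univ, true_and] at hk hk'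
      exact Tfun_inj_eq hk hk' heq),
    Finset.sum_image (fun k hk k' hk' heq => by
      simp only [Finset.mem_coe, Finset.mem_filter, Finset.mem_univ, true_and] at hk hk'
      exact Tfun_inj_eq hk hk' heq)]
  congr 1 <;>
  · apply Finset.sum_congr rfl
    intro k hk
    simp only [Finset.mem_filter, Finset.mem_univ, true_and] at hk
    exact Tfun_weight hk

lemma entry_formula (G : Matrix (Fin n) (Fin n) ℝ)
    (hpos : ∀ i j, 0 ≤ G i j) (hdiag : ∀ i, G i i = 0) (i j : Fin n) :
    (∑ k, if cyc3 G i k j then G i k + G k j + G j i else 0)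
    = had (Jmat G)ᵀ (Jmat G * G) i j + had (Jmat G)ᵀ (G * Jmat G) i j +
      had Gᵀ (Jmat G * Jmat G) i j := by
  simp only [had, Matrix.transpose_apply, Matrix.mul_apply, Jmat]
  rw [Finset.mul_sum, Finset.mul_sum, Finset.mul_sum, ← Finset.sum_add_distrib,
    ← Finset.sum_add_distrib]
  apply Finset.sum_congr rfl
  intro k _
  simp only [cyc3]
  by_cases h1 : (i, k) ∈ edgeFinset G
  · by_cases h2 : (k, j) ∈ edgeFinset G
    · by_cases h3 : (j, i) ∈ edgeFinset G
      · simp [h1, h2, h3]; ring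
      · simp [h1, h2, h3, G_zero hpos hdiag h3]
    · simp [h1, h2, G_zero hpos hdiag h2]
  · simp [h1, G_zero hpos hdiag h1]

end AuxM1

/-- **Functional MAM formula for the cyclic triangle motif `M₁`.** -/
theorem mam_M1_func
    (G : Matrix (Fin n) (Fin n) ℝ)
    (hpos : ∀ i j, 0 ≤ G i j) (hdiag : ∀ i, G i i = 0)
    (M1 : Motif 3) (hM : M1.edges = {((0 : Fin 3), 1), (1, 2), (2, 0)}) :
    mamFunc M1 Finset.univ G =
      (1 / 3 : ℝ) •
        (had (Jmat G)ᵀ (Jmat G * G) + had (Jmat G)ᵀ (G * Jmat G) + had Gᵀ (Jmat G * Jmat G) +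
          (had (Jmat G)ᵀ (Jmat G * G) + had (Jmat G)ᵀ (G * Jmat G) +
            had Gᵀ (Jmat G * Jmat G))ᵀ) := by
  have hcard : (M1.edges.card : ℝ) = 3 := by
    rw [hM]
    norm_num [show ({((0 : Fin 3), 1), (1, 2), (2, 0)} :
      Finset (Fin 3 × Fin 3)).card = 3 from by decide]
  funext i j
  simp only [mamFunc, Matrix.smul_apply, Matrix.add_apply, Matrix.transpose_apply,
    smul_eq_mul]
  rw [sum_char G M1 hM i j, hcard, ← entry_formula G hpos hdiag i j,
    ← entry_formula G hpos hdiag j i]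
end
end

section
/- Let G be a weighted directed graph on vertex set V = {1,…,n} and let M_8 be the simple out-star motif with vertices {1,2,3} and edge set E_M = {(1,2),(1,3)}. Then the functional motif adjacency matrix of M_8 in G satisfies M^func = (1/2)·(C + Cᵀ + C'), where C = J ∘ (G J_n) + G ∘ (J J_n) and C' = J_n ∘ (Jᵀ G) + J_n ∘ (Gᵀ J). -/
open scoped Classical BigOperators Matrix

noncomputable section

variable {n m : ℕ}

section M8Aux

open Finset

variable {n : ℕ}

private lemma mem_edge {G : Matrix (Fin n) (Fin n) ℝ} {p : Fin n × Fin n} :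
    p ∈ edgeFinset G ↔ p.1 ≠ p.2 ∧ 0 < G p.1 p.2 := by
  simp [edgeFinset]

private lemma Gzero (G : Matrix (Fin n) (Fin n) ℝ) (hpos : ∀ i j, 0 ≤ G i j)
    (hdiag : ∀ i, G i i = 0) {i j : Fin n} (h : (i, j) ∉ edgeFinset G) : G i j = 0 := by
  by_cases hij : i = j
  · subst hij; exact hdiag i
  · rw [mem_edge] at h
    push_neg at h
    exact le_antisymm (h hij) (hpos i j)

private lemma image_fin3 (φ : Fin 3 → Fin n) :
    Finset.image φ Finset.univ = {φ 0, φ 1, φ 2} := by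
  rw [show (Finset.univ : Finset (Fin 3)) = {0, 1, 2} from by decide]
  simp

private lemma cond_iff (G : Matrix (Fin n) (Fin n) ℝ)
    (M8 : Motif 3) (hM : M8.edges = {((0 : Fin 3), 1), (0, 2)})
    (H : Finset (Fin n) × Finset (Fin n × Fin n)) (i j : Fin n) :
    (IsFuncInstance M8 G H ∧ AnchoredPair M8 Finset.univ H i j) ↔
      ∃ a b c : Fin n, a ≠ b ∧ a ≠ c ∧ b ≠ c ∧
        (a, b) ∈ edgeFinset G ∧ (a, c) ∈ edgeFinset G ∧
        H = ({a, b, c}, {(a, b), (a, c)}) ∧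
        i ∈ ({a, b, c} : Finset (Fin n)) ∧ j ∈ ({a, b, c} : Finset (Fin n)) ∧ i ≠ j := by
  constructor
  · rintro ⟨⟨hGP, hsub, -⟩, φ, ⟨hinj, himg, hedge⟩, a', -, b', -, hab', rfl, rfl⟩
    have h01 : ((0 : Fin 3), (1 : Fin 3)) ∈ M8.edges := by rw [hM]; decide
    have h02 : ((0 : Fin 3), (2 : Fin 3)) ∈ M8.edges := by rw [hM]; decide
    refine ⟨φ 0, φ 1, φ 2, hinj.ne (by decide), hinj.ne (by decide), hinj.ne (by decide),
      hsub ((hedge 0 1).1 h01), hsub ((hedge 0 2).1 h02), ?_, ?_, ?_,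
      fun h => hab' (hinj h)⟩
    · refine Prod.ext ?_ ?_
      · rw [← himg, image_fin3]
      · apply Finset.Subset.antisymm
        · intro x hx
          obtain ⟨hx1, hx2, -⟩ := hGP x hx
          rw [← himg] at hx1 hx2
          obtain ⟨u, -, hu⟩ := Finset.mem_image.1 hx1
          obtain ⟨v, -, hv⟩ := Finset.mem_image.1 hx2
          have hx' : (φ u, φ v) ∈ H.2 := by rw [hu, hv]; simpa using hx
          have huv := (hedge u v).2 hx'
          rw [hM] at huv
          simp only [Finset.mem_insert, Finset.mem_singleton, Prod.mk.injEq] at huv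
          simp only [Finset.mem_insert, Finset.mem_singleton, Prod.ext_iff] at *
          rcases huv with ⟨rfl, rfl⟩ | ⟨rfl, rfl⟩
          · exact Or.inl ⟨hu.symm, hv.symm⟩
          · exact Or.inr ⟨hu.symm, hv.symm⟩
        · intro x hx
          simp only [Finset.mem_insert, Finset.mem_singleton] at hx
          rcases hx with rfl | rfl
          · exact (hedge 0 1).1 h01
          · exact (hedge 0 2).1 h02
    · rw [← image_fin3]; exact Finset.mem_image_of_mem φ (Finset.mem_univ a')
    · rw [← image_fin3]; exact Finset.mem_image_of_mem φ (Finset.mem_univ b')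
  · rintro ⟨a, b, c, hab, hac, hbc, hE1, hE2, rfl, hi, hj, hij⟩
    have hinj : Function.Injective ![a, b, c] := by
      intro u v huv
      fin_cases u <;> fin_cases v <;> simp_all
    have himg : Finset.image ![a, b, c] Finset.univ = ({a, b, c} : Finset (Fin n)) := by
      rw [image_fin3]; simp
    have hedge : ∀ u v : Fin 3, (u, v) ∈ M8.edges ↔
        (![a, b, c] u, ![a, b, c] v) ∈ ({(a, b), (a, c)} : Finset (Fin n × Fin n)) := by
      intro u v
      rw [hM]
      fin_cases u <;> fin_cases v <;>
        simp [Prod.ext_iff, hab, hac, hbc, hab.symm, hac.symm, hbc.symm]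
    have hiso : IsIso M8 ({a, b, c}, {(a, b), (a, c)}) ![a, b, c] := ⟨hinj, himg, hedge⟩
    have hGP : IsGraphPair (({a, b, c} : Finset (Fin n)),
        ({(a, b), (a, c)} : Finset (Fin n × Fin n))) := by
      rintro e he
      simp only [Finset.mem_insert, Finset.mem_singleton] at he
      rcases he with rfl | rfl <;> simp [hab, hac]
    have hsub : ({(a, b), (a, c)} : Finset (Fin n × Fin n)) ⊆ edgeFinset G := by
      intro e he
      simp only [Finset.mem_insert, Finset.mem_singleton] at he
      rcases he with rfl | rfl
      · exact hE1
      · exact hE2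
    refine ⟨⟨hGP, hsub, ![a, b, c], hiso⟩, ![a, b, c], hiso, ?_⟩
    rw [← himg] at hi hj
    obtain ⟨u, -, hu⟩ := Finset.mem_image.1 hi
    obtain ⟨v, -, hv⟩ := Finset.mem_image.1 hj
    exact ⟨u, Finset.mem_univ u, v, Finset.mem_univ v,
      fun h => hij (by rw [← hu, ← hv, h]), hu, hv⟩

private lemma pt1 (G : Matrix (Fin n) (Fin n) ℝ) (hpos : ∀ i j, 0 ≤ G i j)
    (hdiag : ∀ i, G i i = 0) (i j k : Fin n) :
    (if (i, j) ∈ edgeFinset G ∧ (i, k) ∈ edgeFinset G ∧ k ≠ i ∧ k ≠ j then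
        G i j + G i k else 0)
      = Jmat G i j * (G i k * Jnmat n k j) + G i j * (Jmat G i k * Jnmat n k j) := by
  by_cases h1 : (i, j) ∈ edgeFinset G
  · by_cases h2 : (i, k) ∈ edgeFinset G
    · have hki : k ≠ i := Ne.symm (mem_edge.1 h2).1
      by_cases h4 : k = j
      · subst h4
        simp [Jnmat]
      · have e1 : Jmat G i j = 1 := by simp [Jmat, h1]
        have e2 : Jmat G i k = 1 := by simp [Jmat, h2]
        have e3 : Jnmat n k j = 1 := by simp [Jnmat, h4]
        rw [if_pos ⟨h1, h2, hki, h4⟩, e1, e2, e3]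
        ring
    · simp [Jmat, h1, h2, Gzero G hpos hdiag h2]
  · simp [Jmat, h1, Gzero G hpos hdiag h1]

private lemma pt3 (G : Matrix (Fin n) (Fin n) ℝ) (hpos : ∀ i j, 0 ≤ G i j)
    (hdiag : ∀ i, G i i = 0) {i j : Fin n} (hij : i ≠ j) (k : Fin n) :
    (if (k, i) ∈ edgeFinset G ∧ (k, j) ∈ edgeFinset G ∧ k ≠ i ∧ k ≠ j then
        G k i + G k j else 0)
      = Jnmat n i j * (Jmat G k i * G k j) + Jnmat n i j * (G k i * Jmat G k j) := by
  have hn : Jnmat n i j = 1 := by simp [Jnmat, hij]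
  by_cases h1 : (k, i) ∈ edgeFinset G
  · by_cases h2 : (k, j) ∈ edgeFinset G
    · have hki : k ≠ i := (mem_edge.1 h1).1
      have hkj : k ≠ j := (mem_edge.1 h2).1
      have e1 : Jmat G k i = 1 := by simp [Jmat, h1]
      have e2 : Jmat G k j = 1 := by simp [Jmat, h2]
      rw [if_pos ⟨h1, h2, hki, hkj⟩, e1, e2, hn]
      ring
    · simp [Jmat, h1, h2, Gzero G hpos hdiag h2, hn]
  · simp [Jmat, h1, Gzero G hpos hdiag h1, hn]

set_option maxHeartbeats 1000000 in
private lemma sum_split (G : Matrix (Fin n) (Fin n) ℝ)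
    (M8 : Motif 3) (hM : M8.edges = {((0 : Fin 3), 1), (0, 2)})
    (i j : Fin n) (hij : i ≠ j) :
    (∑ H : Finset (Fin n) × Finset (Fin n × Fin n),
      if IsFuncInstance M8 G H ∧ AnchoredPair M8 Finset.univ H i j then
        ∑ e ∈ H.2, G e.1 e.2 else 0)
    = (∑ k, if (i, j) ∈ edgeFinset G ∧ (i, k) ∈ edgeFinset G ∧ k ≠ i ∧ k ≠ j then
          G i j + G i k else 0)
      + (∑ k, if (j, i) ∈ edgeFinset G ∧ (j, k) ∈ edgeFinset G ∧ k ≠ j ∧ k ≠ i then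
          G j i + G j k else 0)
      + (∑ k, if (k, i) ∈ edgeFinset G ∧ (k, j) ∈ edgeFinset G ∧ k ≠ i ∧ k ≠ j then
          G k i + G k j else 0) := by
  classical
  set f1 : Fin n → Finset (Fin n) × Finset (Fin n × Fin n) :=
    fun k => ({i, j, k}, {(i, j), (i, k)}) with hf1
  set f2 : Fin n → Finset (Fin n) × Finset (Fin n × Fin n) :=
    fun k => ({i, j, k}, {(j, i), (j, k)}) with hf2
  set f3 : Fin n → Finset (Fin n) × Finset (Fin n × Fin n) :=
    fun k => ({i, j, k}, {(k, i), (k, j)}) with hf3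
  set S1 := Finset.univ.filter (fun k : Fin n =>
    (i, j) ∈ edgeFinset G ∧ (i, k) ∈ edgeFinset G ∧ k ≠ i ∧ k ≠ j) with hS1
  set S2 := Finset.univ.filter (fun k : Fin n =>
    (j, i) ∈ edgeFinset G ∧ (j, k) ∈ edgeFinset G ∧ k ≠ j ∧ k ≠ i) with hS2
  set S3 := Finset.univ.filter (fun k : Fin n =>
    (k, i) ∈ edgeFinset G ∧ (k, j) ∈ edgeFinset G ∧ k ≠ i ∧ k ≠ j) with hS3
  have hT : (Finset.univ.filter
        (fun H => IsFuncInstance M8 G H ∧ AnchoredPair M8 Finset.univ H i j))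
      = (S1.image f1 ∪ S2.image f2) ∪ S3.image f3 := by
    ext H
    simp only [Finset.mem_filter, Finset.mem_univ, true_and, Finset.mem_union,
      Finset.mem_image, hS1, hS2, hS3, hf1, hf2, hf3]
    rw [cond_iff G M8 hM H i j]
    constructor
    · rintro ⟨a, b, c, hab, hac, hbc, hE1, hE2, rfl, hi, hj, -⟩
      simp only [Finset.mem_insert, Finset.mem_singleton] at hi hj
      rcases hi with rfl | rfl | rfl
      · rcases hj with rfl | rfl | rfl
        · exact absurd rfl hij
        · exact Or.inl (Or.inl ⟨c, ⟨hE1, hE2, Ne.symm hac, Ne.symm hbc⟩,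
            by first | rfl | (simp only [Prod.mk.injEq]; constructor <;> (first | trivial | (ext x; simp; try tauto)))⟩)
        · exact Or.inl (Or.inl ⟨b, ⟨hE2, hE1, Ne.symm hab, hbc⟩,
            by first | rfl | (simp only [Prod.mk.injEq]; constructor <;> (first | trivial | (ext x; simp; try tauto)))⟩)
      · rcases hj with rfl | rfl | rfl
        · exact Or.inl (Or.inr ⟨c, ⟨hE1, hE2, Ne.symm hac, Ne.symm hbc⟩,
            by first | rfl | (simp only [Prod.mk.injEq]; constructor <;> (first | trivial | (ext x; simp; try tauto)))⟩)
        · exact absurd rfl hij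
        · exact Or.inr ⟨a, ⟨hE1, hE2, hab, hac⟩,
            by first | rfl | (simp only [Prod.mk.injEq]; constructor <;> (first | trivial | (ext x; simp; try tauto)))⟩
      · rcases hj with rfl | rfl | rfl
        · exact Or.inl (Or.inr ⟨b, ⟨hE2, hE1, Ne.symm hab, hbc⟩,
            by first | rfl | (simp only [Prod.mk.injEq]; constructor <;> (first | trivial | (ext x; simp; try tauto)))⟩)
        · exact Or.inr ⟨a, ⟨hE2, hE1, hac, hab⟩,
            by first | rfl | (simp only [Prod.mk.injEq]; constructor <;> (first | trivial | (ext x; simp; try tauto)))⟩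
        · exact absurd rfl hij
    · rintro ((⟨k, ⟨h1, h2, h3, h4⟩, rfl⟩ | ⟨k, ⟨h1, h2, h3, h4⟩, rfl⟩) | ⟨k, ⟨h1, h2, h3, h4⟩, rfl⟩)
      · exact ⟨i, j, k, hij, Ne.symm h3, Ne.symm h4, h1, h2, rfl, by simp, by simp, hij⟩
      · refine ⟨j, i, k, Ne.symm hij, Ne.symm h3, Ne.symm h4, h1, h2, ?_, by simp, by simp, hij⟩
        first
        | rfl
        | (simp only [Prod.mk.injEq]; constructor <;> (first | trivial | (ext x; simp; try tauto)))
      · refine ⟨k, i, j, h3, h4, hij, h1, h2, ?_, by simp, by simp, hij⟩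
        first
        | rfl
        | (simp only [Prod.mk.injEq]; constructor <;> (first | trivial | (ext x; simp; try tauto)))
  have d12 : Disjoint (S1.image f1) (S2.image f2) := by
    rw [Finset.disjoint_left]
    intro H hH1 hH2
    simp only [Finset.mem_image, hS1, hS2, hf1, hf2, Finset.mem_filter, Finset.mem_univ,
      true_and] at hH1 hH2
    obtain ⟨k, -, rfl⟩ := hH1
    obtain ⟨k', -, h⟩ := hH2
    have hs : ({(j, i), (j, k')} : Finset (Fin n × Fin n)) = {(i, j), (i, k)} :=
      congrArg Prod.snd h
    have hm : ((j, i) : Fin n × Fin n) ∈ ({(i, j), (i, k)} : Finset (Fin n × Fin n)) := by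
      rw [← hs]; simp
    simp only [Finset.mem_insert, Finset.mem_singleton, Prod.mk.injEq] at hm
    rcases hm with ⟨h', -⟩ | ⟨h', -⟩ <;> exact hij h'.symm
  have d13 : Disjoint (S1.image f1) (S3.image f3) := by
    rw [Finset.disjoint_left]
    intro H hH1 hH2
    simp only [Finset.mem_image, hS1, hS3, hf1, hf3, Finset.mem_filter, Finset.mem_univ,
      true_and] at hH1 hH2
    obtain ⟨k, -, rfl⟩ := hH1
    obtain ⟨k', ⟨-, -, h3', -⟩, h⟩ := hH2
    have hs : ({(k', i), (k', j)} : Finset (Fin n × Fin n)) = {(i, j), (i, k)} :=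
      congrArg Prod.snd h
    have hm : ((i, j) : Fin n × Fin n) ∈ ({(k', i), (k', j)} : Finset (Fin n × Fin n)) := by
      rw [hs]; simp
    simp only [Finset.mem_insert, Finset.mem_singleton, Prod.mk.injEq] at hm
    rcases hm with ⟨h', -⟩ | ⟨h', -⟩ <;> exact h3' h'.symm
  have d23 : Disjoint (S2.image f2) (S3.image f3) := by
    rw [Finset.disjoint_left]
    intro H hH1 hH2
    simp only [Finset.mem_image, hS2, hS3, hf2, hf3, Finset.mem_filter, Finset.mem_univ,
      true_and] at hH1 hH2
    obtain ⟨k, -, rfl⟩ := hH1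
    obtain ⟨k', ⟨-, -, -, h4'⟩, h⟩ := hH2
    have hs : ({(k', i), (k', j)} : Finset (Fin n × Fin n)) = {(j, i), (j, k)} :=
      congrArg Prod.snd h
    have hm : ((j, i) : Fin n × Fin n) ∈ ({(k', i), (k', j)} : Finset (Fin n × Fin n)) := by
      rw [hs]; simp
    simp only [Finset.mem_insert, Finset.mem_singleton, Prod.mk.injEq] at hm
    rcases hm with ⟨h', -⟩ | ⟨h', -⟩ <;> exact h4' h'.symm
  have inj1 : ∀ x ∈ S1, ∀ y ∈ S1, f1 x = f1 y → x = y := by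
    intro x hx y hy h
    simp only [hS1, Finset.mem_filter] at hx
    have hs : ({(i, j), (i, x)} : Finset (Fin n × Fin n)) = {(i, j), (i, y)} :=
      congrArg Prod.snd h
    have hm : ((i, x) : Fin n × Fin n) ∈ ({(i, j), (i, y)} : Finset (Fin n × Fin n)) := by
      rw [← hs]; simp
    simp only [Finset.mem_insert, Finset.mem_singleton, Prod.mk.injEq] at hm
    rcases hm with ⟨-, h'⟩ | ⟨-, h'⟩
    · exact absurd h' hx.2.2.2.2
    · exact h'
  have inj2 : ∀ x ∈ S2, ∀ y ∈ S2, f2 x = f2 y → x = y := by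
    intro x hx y hy h
    simp only [hS2, Finset.mem_filter] at hx
    have hs : ({(j, i), (j, x)} : Finset (Fin n × Fin n)) = {(j, i), (j, y)} :=
      congrArg Prod.snd h
    have hm : ((j, x) : Fin n × Fin n) ∈ ({(j, i), (j, y)} : Finset (Fin n × Fin n)) := by
      rw [← hs]; simp
    simp only [Finset.mem_insert, Finset.mem_singleton, Prod.mk.injEq] at hm
    rcases hm with ⟨-, h'⟩ | ⟨-, h'⟩
    · exact absurd h' hx.2.2.2.2
    · exact h'
  have inj3 : ∀ x ∈ S3, ∀ y ∈ S3, f3 x = f3 y → x = y := by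
    intro x hx y hy h
    have hs : ({(x, i), (x, j)} : Finset (Fin n × Fin n)) = {(y, i), (y, j)} :=
      congrArg Prod.snd h
    have hm : ((x, i) : Fin n × Fin n) ∈ ({(y, i), (y, j)} : Finset (Fin n × Fin n)) := by
      rw [← hs]; simp
    simp only [Finset.mem_insert, Finset.mem_singleton, Prod.mk.injEq] at hm
    rcases hm with ⟨h', -⟩ | ⟨-, h'⟩
    · exact h'
    · exact absurd h'.symm (Ne.symm hij)
  rw [← Finset.sum_filter, hT, Finset.sum_union (Finset.disjoint_union_left.mpr ⟨d13, d23⟩),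
    Finset.sum_union d12, Finset.sum_image inj1, Finset.sum_image inj2, Finset.sum_image inj3]
  congr 1
  congr 1
  · rw [hS1, Finset.sum_filter]
    apply Finset.sum_congr rfl
    intro k _
    split_ifs with h
    · rw [hf1]
      simp only
      rw [Finset.sum_pair (fun hp => h.2.2.2 (show k = j from (congrArg Prod.snd hp).symm))]
    · rfl
  · rw [hS2, Finset.sum_filter]
    apply Finset.sum_congr rfl
    intro k _
    split_ifs with h
    · rw [hf2]
      simp only
      rw [Finset.sum_pair (fun hp => h.2.2.2 (show k = i from (congrArg Prod.snd hp).symm))]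
    · rfl
  · rw [hS3, Finset.sum_filter]
    apply Finset.sum_congr rfl
    intro k _
    split_ifs with h
    · rw [hf3]
      simp only
      rw [Finset.sum_pair (fun hp => hij (show i = j from congrArg Prod.snd hp))]
    · rfl


end M8Aux


/-- **Functional MAM formula for the out-star motif `M₈`.** -/
theorem mam_M8_func
    (G : Matrix (Fin n) (Fin n) ℝ)
    (hpos : ∀ i j, 0 ≤ G i j) (hdiag : ∀ i, G i i = 0)
    (M8 : Motif 3) (hM : M8.edges = {((0 : Fin 3), 1), (0, 2)}) :
    mamFunc M8 Finset.univ G =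
      (1 / 2 : ℝ) •
        (had (Jmat G) (G * Jnmat n) + had G (Jmat G * Jnmat n) +
          (had (Jmat G) (G * Jnmat n) + had G (Jmat G * Jnmat n))ᵀ +
          (had (Jnmat n) ((Jmat G)ᵀ * G) + had (Jnmat n) (Gᵀ * Jmat G))) := by
  classical
  have hcardn : M8.edges.card = 2 := by rw [hM]; decide
  have hcast : (M8.edges.card : ℝ) = 2 := by rw [hcardn]; norm_num
  ext i j
  simp only [mamFunc, hcast]
  by_cases hij : i = j
  · subst hij
    have hz : ∀ H : Finset (Fin n) × Finset (Fin n × Fin n),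
        (if IsFuncInstance M8 G H ∧ AnchoredPair M8 Finset.univ H i i then
          ∑ e ∈ H.2, G e.1 e.2 else 0) = 0 := by
      intro H
      rw [if_neg]
      rintro ⟨-, φ, ⟨hinj, -, -⟩, a, -, b, -, hab, ha, hb⟩
      exact hab (hinj (ha.trans hb.symm))
    rw [Finset.sum_eq_zero (fun H _ => hz H), mul_zero]
    symm
    simp [had, Jmat, Jnmat, edgeFinset, hdiag, Matrix.add_apply, Matrix.smul_apply,
      Matrix.transpose_apply]
  · rw [sum_split G M8 hM i j hij]
    have h1 : ∀ p q : Fin n,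
        (∑ k, if (p, q) ∈ edgeFinset G ∧ (p, k) ∈ edgeFinset G ∧ k ≠ p ∧ k ≠ q then
            G p q + G p k else 0)
          = Jmat G p q * (∑ k, G p k * Jnmat n k q)
            + G p q * (∑ k, Jmat G p k * Jnmat n k q) := by
      intro p q
      rw [Finset.mul_sum, Finset.mul_sum, ← Finset.sum_add_distrib]
      exact Finset.sum_congr rfl fun k _ => pt1 G hpos hdiag p q k
    have h3 : (∑ k, if (k, i) ∈ edgeFinset G ∧ (k, j) ∈ edgeFinset G ∧ k ≠ i ∧ k ≠ j then
            G k i + G k j else 0)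
          = Jnmat n i j * (∑ k, Jmat G k i * G k j)
            + Jnmat n i j * (∑ k, G k i * Jmat G k j) := by
      rw [Finset.mul_sum, Finset.mul_sum, ← Finset.sum_add_distrib]
      exact Finset.sum_congr rfl fun k _ => pt3 G hpos hdiag hij k
    rw [h1 i j, h1 j i, h3]
    simp only [Matrix.smul_apply, Matrix.add_apply, Matrix.transpose_apply, Matrix.mul_apply,
      had, smul_eq_mul]
    try ring
end
end
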